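/- Under the same multi-logger setting with δ ∈ [0, L] and d_∞(h||h_j) ≤ M_j, setting M_naive = max_j M_j, for any η > 0, with probability at least 1 − η: R(h) ≤ R̂_naive(h) + (2 L M_naive log(1/η))/(3n) + L √((2 Σ_{j=1}^J n_j d_2(h||h_j; P) log(1/η))/n^2). -/

import Mathlib

open MeasureTheory ProbabilityTheory Real
open scoped ENNReal NNReal

lemma aux_exp_neg_le {u : ℝ} (hu : 0 ≤ u) : Real.exp (-u) ≤ 1 - u + u ^ 2 / 2 := by
  have hd : ∀ x : ℝ, HasDerivAt (fun x : ℝ => 1 - x + x ^ 2 / 2 - Real.exp (-x))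
      (x - 1 + Real.exp (-x)) x := by
    intro x
    have h1 : HasDerivAt (fun x : ℝ => 1 - x + x ^ 2 / 2) (-1 + x) x := by
      have := ((hasDerivAt_const x (1:ℝ)).sub (hasDerivAt_id x)).add
        ((hasDerivAt_pow 2 x).div_const 2)
      exact this.congr_deriv (by norm_num)
    have h2 : HasDerivAt (fun x : ℝ => Real.exp (-x)) (-Real.exp (-x)) x := by
      simpa using (hasDerivAt_neg x).exp
    exact (h1.sub h2).congr_deriv (by ring)
  have hmono : MonotoneOn (fun x : ℝ => 1 - x + x ^ 2 / 2 - Real.exp (-x)) (Set.Ici 0) := by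
    apply monotoneOn_of_deriv_nonneg (convex_Ici 0)
    · exact Continuous.continuousOn (by continuity)
    · intro x hx
      exact (hd x).differentiableAt.differentiableWithinAt
    · intro x hx
      rw [(hd x).deriv]
      rw [interior_Ici] at hx
      have : 1 - x ≤ Real.exp (-x) := by
        have := Real.add_one_le_exp (-x); linarith
      linarith
  have h0 : (fun x : ℝ => 1 - x + x ^ 2 / 2 - Real.exp (-x)) 0 ≤
      (fun x : ℝ => 1 - x + x ^ 2 / 2 - Real.exp (-x)) u :=
    hmono (Set.self_mem_Ici) hu hu
  simp at h0
  linarith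

lemma lower_tail_bound {Ω ι : Type*} [MeasurableSpace Ω] [Fintype ι]
    (μΩ : Measure Ω) [IsProbabilityMeasure μΩ] (Y : ι → Ω → ℝ)
    (hmeas : ∀ i, Measurable (Y i))
    (hindep : iIndepFun Y μΩ)
    (b : ℝ) (hY : ∀ i ω, Y i ω ∈ Set.Icc 0 b)
    (m v : ι → ℝ) (hm : ∀ i, ∫ ω, Y i ω ∂μΩ = m i)
    (hv : ∀ i, ∫ ω, (Y i ω) ^ 2 ∂μΩ ≤ v i)
    (s t : ℝ) (hs : 0 ≤ s) :
    (μΩ {ω | t ≤ (∑ i, m i) - ∑ i, Y i ω}).toReal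
      ≤ Real.exp (-(s * t) + s ^ 2 * (∑ i, v i) / 2) := by
  classical
  set S : Ω → ℝ := ∑ i, Y i with hS
  have hSapp : ∀ ω, S ω = ∑ i, Y i ω := by
    intro ω; simp [hS, Finset.sum_apply]
  have hSmeas : Measurable S := by
    have := Finset.measurable_sum (f := Y) Finset.univ (fun i _ => hmeas i)
    convert this using 1
    funext ω; exact hSapp ω
  -- integrability of exp (s * (-S))
  have hSnonneg : ∀ ω, 0 ≤ S ω := by
    intro ω; rw [hSapp]
    exact Finset.sum_nonneg fun i _ => (hY i ω).1
  have h_int : Integrable (fun ω => Real.exp (s * (-S) ω)) μΩ := by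
    apply Integrable.mono' (integrable_const (1 : ℝ))
    · exact (((hSmeas.neg).const_mul s).exp).aestronglyMeasurable
    · filter_upwards with ω
      rw [Real.norm_eq_abs, Real.abs_exp, Real.exp_le_one_iff]
      simp only [Pi.neg_apply, mul_neg]
      exact neg_nonpos.mpr (mul_nonneg hs (hSnonneg ω))
  -- Chernoff
  have hcher := measure_ge_le_exp_mul_mgf (X := -S) (μ := μΩ) (t := s)
      (t - ∑ i, m i) hs h_int
  have hev : {ω | t - ∑ i, m i ≤ (-S) ω} = {ω | t ≤ (∑ i, m i) - ∑ i, Y i ω} := by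
    ext ω; simp only [Set.mem_setOf_eq, Pi.neg_apply, hSapp]
    constructor <;> intro hh <;> linarith
  rw [hev] at hcher
  -- mgf factorization
  have hmgf : mgf (-S) μΩ s = ∏ i, mgf (Y i) μΩ (-s) := by
    rw [mgf_neg, hS, hindep.mgf_sum hmeas]
  -- per-variable bound
  have hone : ∀ i, mgf (Y i) μΩ (-s) ≤ Real.exp (-(s * m i) + s ^ 2 * v i / 2) := by
    intro i
    have hYint : Integrable (Y i) μΩ := by
      apply Integrable.mono' (integrable_const (max b 0))
      · exact (hmeas i).aestronglyMeasurable
      · filter_upwards with ω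
        rw [Real.norm_eq_abs, abs_of_nonneg (hY i ω).1]
        exact le_max_of_le_left (hY i ω).2
    have hY2int : Integrable (fun ω => (Y i ω) ^ 2) μΩ := by
      apply Integrable.mono' (integrable_const ((max b 0) ^ 2))
      · exact ((hmeas i).pow_const 2).aestronglyMeasurable
      · filter_upwards with ω
        rw [Real.norm_eq_abs, abs_of_nonneg (sq_nonneg (Y i ω))]
        apply pow_le_pow_left₀ (hY i ω).1
        exact le_max_of_le_left (hY i ω).2
    have hstep1 : mgf (Y i) μΩ (-s)
        ≤ ∫ ω, (1 - s * Y i ω + (s * Y i ω) ^ 2 / 2) ∂μΩ := by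
      rw [mgf]
      apply integral_mono _ _ ?_
      · apply Integrable.mono' (integrable_const (1 : ℝ))
        · exact (((hmeas i).const_mul (-s)).exp).aestronglyMeasurable
        · filter_upwards with ω
          rw [Real.norm_eq_abs, Real.abs_exp, Real.exp_le_one_iff]
          exact mul_nonpos_of_nonpos_of_nonneg (neg_nonpos.mpr hs) (hY i ω).1
      · apply Integrable.add
        · exact (integrable_const (1:ℝ)).sub (hYint.const_mul s)
        · apply Integrable.div_const
          have : (fun ω => (s * Y i ω) ^ 2) = fun ω => s ^ 2 * (Y i ω) ^ 2 := by
            funext ω; ring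
          rw [this]
          exact hY2int.const_mul _
      · intro ω
        have hu : 0 ≤ s * Y i ω := mul_nonneg hs (hY i ω).1
        have := aux_exp_neg_le hu
        calc Real.exp (-s * Y i ω) = Real.exp (-(s * Y i ω)) := by ring_nf
          _ ≤ 1 - s * Y i ω + (s * Y i ω) ^ 2 / 2 := this
    have hstep2 : ∫ ω, (1 - s * Y i ω + (s * Y i ω) ^ 2 / 2) ∂μΩ
        = 1 - s * m i + s ^ 2 * (∫ ω, (Y i ω) ^ 2 ∂μΩ) / 2 := by
      have hmul : (fun ω => (s * Y i ω) ^ 2 / 2) = fun ω => (s ^ 2 / 2) * (Y i ω) ^ 2 := by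
        funext ω; ring
      rw [integral_add, integral_sub (integrable_const _) (hYint.const_mul s),
        integral_const, hmul, integral_const_mul, integral_const_mul, hm i]
      · simp; ring
      · exact (integrable_const _).sub (hYint.const_mul s)
      · rw [hmul]; exact hY2int.const_mul _
    have hstep3 : 1 - s * m i + s ^ 2 * (∫ ω, (Y i ω) ^ 2 ∂μΩ) / 2
        ≤ 1 + (-(s * m i) + s ^ 2 * v i / 2) := by
      have := hv i
      have hs2 : 0 ≤ s ^ 2 := sq_nonneg s
      nlinarith
    calc mgf (Y i) μΩ (-s) ≤ _ := hstep1
      _ = _ := hstep2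
      _ ≤ 1 + (-(s * m i) + s ^ 2 * v i / 2) := hstep3
      _ ≤ Real.exp (-(s * m i) + s ^ 2 * v i / 2) := by
          have := Real.add_one_le_exp (-(s * m i) + s ^ 2 * v i / 2); linarith
  have hprod : ∏ i, mgf (Y i) μΩ (-s) ≤ ∏ i, Real.exp (-(s * m i) + s ^ 2 * v i / 2) :=
    Finset.prod_le_prod (fun i _ => mgf_nonneg) (fun i _ => hone i)
  rw [← Real.exp_sum] at hprod
  calc (μΩ {ω | t ≤ (∑ i, m i) - ∑ i, Y i ω}).toReal
      ≤ Real.exp (-s * (t - ∑ i, m i)) * mgf (-S) μΩ s := hcher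
    _ ≤ Real.exp (-s * (t - ∑ i, m i)) *
        Real.exp (∑ i, (-(s * m i) + s ^ 2 * v i / 2)) := by
        rw [hmgf]
        exact mul_le_mul_of_nonneg_left hprod (Real.exp_nonneg _)
    _ = Real.exp (-(s * t) + s ^ 2 * (∑ i, v i) / 2) := by
        rw [← Real.exp_add]
        congr 1
        rw [Finset.sum_add_distrib]
        have e1 : ∑ x : ι, -(s * m x) = -s * ∑ i, m i := by
          rw [Finset.mul_sum]; exact Finset.sum_congr rfl fun x _ => by ring
        have e2 : ∑ x : ι, s ^ 2 * v x / 2 = s ^ 2 * (∑ i, v i) / 2 := by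
          rw [Finset.mul_sum, Finset.sum_div]
        rw [e1, e2]; ring

set_option maxHeartbeats 1000000 in
theorem naive_generalization_bound {X Y Ω : Type*} [MeasurableSpace X]
    [MeasurableSpace Y] [MeasurableSpace Ω]
    (μ : Measure X) (ν : Measure Y) [SigmaFinite μ] [SigmaFinite ν]
    (μΩ : Measure Ω) [IsProbabilityMeasure μΩ]
    (J : ℕ) (nvec : Fin J → ℕ) (hn : 0 < ∑ j, nvec j)
    (Z : (j : Fin J) → Fin (nvec j) → Ω → X × Y)
    (Pd : X → ℝ) (h : X → Y → ℝ) (hj : Fin J → X → Y → ℝ) (δ : X × Y → ℝ)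
    (L : ℝ) (M : Fin J → ℝ) (Mnaive : ℝ) (η : ℝ) (hη : 0 < η)
    (hP_nonneg : ∀ x, 0 ≤ Pd x) (hP_density : ∫ x, Pd x ∂μ = 1) (hP_meas : Measurable Pd)
    (hh_nonneg : ∀ x y, 0 ≤ h x y) (hh_density : ∀ x, ∫ y, h x y ∂ν = 1)
    (hh_meas : Measurable fun z : X × Y => h z.1 z.2)
    (hj_pos : ∀ j x y, 0 < hj j x y) (hj_density : ∀ j x, ∫ y, hj j x y ∂ν = 1)
    (hj_meas : ∀ j, Measurable fun z : X × Y => hj j z.1 z.2)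
    (hδ : ∀ z, δ z ∈ Set.Icc (0 : ℝ) L) (hδ_meas : Measurable δ)
    (hM : ∀ j x y, h x y / hj j x y ≤ M j)
    (hMnaive : ∀ j, M j ≤ Mnaive)
    (hZ_meas : ∀ j i, Measurable (Z j i))
    (hlaw : ∀ j i, Measure.map (Z j i) μΩ
      = (μ.prod ν).withDensity fun z => ENNReal.ofReal (hj j z.1 z.2 * Pd z.1))
    (hind : iIndepFun
      (fun p : (j : Fin J) × Fin (nvec j) => Z p.1 p.2) μΩ)
    (hd2_int : ∀ j, Integrable
      (fun z : X × Y => (h z.1 z.2) ^ 2 / hj j z.1 z.2 * Pd z.1) (μ.prod ν))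
    (hR_int : Integrable (fun z : X × Y => δ z * h z.1 z.2 * Pd z.1) (μ.prod ν)) :
    μΩ {ω | ∫ z : X × Y, δ z * h z.1 z.2 * Pd z.1 ∂(μ.prod ν)
        ≤ (1 / (∑ j, (nvec j : ℝ))) * (∑ j,
            ∑ i, h (Z j i ω).1 (Z j i ω).2 / hj j (Z j i ω).1 (Z j i ω).2 * δ (Z j i ω))
          + 2 * L * Mnaive * Real.log (1 / η) / (3 * ∑ j, (nvec j : ℝ))
          + L * Real.sqrt (2 * (∑ j, (nvec j : ℝ) *
              ∫ z : X × Y, (h z.1 z.2) ^ 2 / hj j z.1 z.2 * Pd z.1 ∂(μ.prod ν))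
              * Real.log (1 / η) / (∑ j, (nvec j : ℝ)) ^ 2)}
      ≥ ENNReal.ofReal (1 - η) := by
  classical
  -- trivial case η ≥ 1
  rcases le_or_gt 1 η with hη1 | hη1
  · have h0 : ENNReal.ofReal (1 - η) = 0 := by
      rw [ENNReal.ofReal_eq_zero]; linarith
    rw [h0]; exact zero_le
  -- abbreviations
  set n : ℝ := ∑ j, (nvec j : ℝ) with hn_def
  set R : ℝ := ∫ z : X × Y, δ z * h z.1 z.2 * Pd z.1 ∂(μ.prod ν) with hR_def
  set g : ℝ := Real.log (1 / η) with hg_def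
  set d2 : Fin J → ℝ :=
    fun j => ∫ z : X × Y, (h z.1 z.2) ^ 2 / hj j z.1 z.2 * Pd z.1 ∂(μ.prod ν) with hd2_def
  set W : ℝ := ∑ j, (nvec j : ℝ) *
    ∫ z : X × Y, (h z.1 z.2) ^ 2 / hj j z.1 z.2 * Pd z.1 ∂(μ.prod ν) with hW_def
  have hWd2 : W = ∑ j, (nvec j : ℝ) * d2 j := rfl
  have hn' : (0 : ℝ) < n := by
    rw [hn_def, ← Nat.cast_sum]
    exact_mod_cast hn
  -- nonemptiness
  have hXne : Nonempty X := by
    by_contra hc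
    rw [not_nonempty_iff] at hc
    rw [integral_of_isEmpty] at hP_density
    norm_num at hP_density
  have hYne : Nonempty Y := by
    by_contra hc
    rw [not_nonempty_iff] at hc
    have := hh_density (Classical.arbitrary X)
    rw [integral_of_isEmpty] at this
    norm_num at this
  obtain ⟨j0, hj0⟩ : ∃ j0, 0 < nvec j0 := by
    by_contra hc
    push_neg at hc
    have : ∑ j, nvec j = 0 := Finset.sum_eq_zero fun j _ => Nat.le_zero.mp (hc j)
    omega
  have x0 : X := Classical.arbitrary X
  have y0 : Y := Classical.arbitrary Y
  have hL : 0 ≤ L := le_trans (hδ (x0, y0)).1 (hδ (x0, y0)).2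
  have hMn : 0 ≤ Mnaive :=
    le_trans (div_nonneg (hh_nonneg x0 y0) (hj_pos j0 x0 y0).le)
      ((hM j0 x0 y0).trans (hMnaive j0))
  have hg0 : 0 < g := Real.log_pos ((one_lt_div hη).mpr hη1)
  have hd2_nonneg : ∀ j, 0 ≤ d2 j := fun j =>
    integral_nonneg fun z =>
      mul_nonneg (div_nonneg (sq_nonneg _) (hj_pos j z.1 z.2).le) (hP_nonneg z.1)
  have hW0 : 0 ≤ W := by
    rw [hWd2]
    exact Finset.sum_nonneg fun j _ => mul_nonneg (Nat.cast_nonneg _) (hd2_nonneg j)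
  -- degenerate case
  by_cases hLW : L ^ 2 * W = 0
  · have hR0 : R = 0 := by
      rcases mul_eq_zero.mp hLW with hL0 | hW00
      · have hL0 : L = 0 := by
          have := sq_nonneg L; nlinarith
        rw [hR_def]
        have : (fun z : X × Y => δ z * h z.1 z.2 * Pd z.1) = fun _ => 0 := by
          funext z
          have h1 := (hδ z).1; have h2 := (hδ z).2
          have : δ z = 0 := le_antisymm (hL0 ▸ h2) h1
          simp [this]
        rw [this, integral_zero]
      · have hterm : (nvec j0 : ℝ) * d2 j0 = 0 := by
          have hsum := (Finset.sum_eq_zero_iff_of_nonneg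
            (fun j (_ : j ∈ Finset.univ) =>
              mul_nonneg (Nat.cast_nonneg (nvec j)) (hd2_nonneg j))).mp
            (hWd2 ▸ hW00)
          exact hsum j0 (Finset.mem_univ _)
        have hd20 : d2 j0 = 0 := by
          have hc : (0 : ℝ) < (nvec j0 : ℝ) := by exact_mod_cast hj0
          rcases mul_eq_zero.mp hterm with hh' | hh'
          · exact absurd hh' hc.ne'
          · exact hh'
        have hae : (fun z : X × Y => (h z.1 z.2) ^ 2 / hj j0 z.1 z.2 * Pd z.1)
            =ᵐ[μ.prod ν] 0 := by
          refine (integral_eq_zero_iff_of_nonneg ?_ (hd2_int j0)).mp hd20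
          intro z
          exact mul_nonneg (div_nonneg (sq_nonneg _) (hj_pos j0 z.1 z.2).le) (hP_nonneg z.1)
        have hae2 : (fun z : X × Y => δ z * h z.1 z.2 * Pd z.1) =ᵐ[μ.prod ν] 0 := by
          filter_upwards [hae] with z hz
          simp only [Pi.zero_apply] at hz ⊢
          rcases mul_eq_zero.mp hz with h1 | h1
          · rw [div_eq_zero_iff] at h1
            rcases h1 with h1 | h1
            · have : h z.1 z.2 = 0 := by
                have := pow_eq_zero_iff (n := 2) (by norm_num) |>.mp h1
                exact this
              simp [this]
            · exact absurd h1 (hj_pos j0 z.1 z.2).ne'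
          · simp [h1]
        rw [hR_def]
        exact integral_eq_zero_of_ae hae2
    have hset : {ω | R ≤ (1 / n) * (∑ j,
            ∑ i, h (Z j i ω).1 (Z j i ω).2 / hj j (Z j i ω).1 (Z j i ω).2 * δ (Z j i ω))
          + 2 * L * Mnaive * g / (3 * n)
          + L * Real.sqrt (2 * W * g / n ^ 2)} = Set.univ := by
      rw [Set.eq_univ_iff_forall]
      intro ω
      simp only [Set.mem_setOf_eq]
      rw [hR0]
      have t1 : 0 ≤ (1 / n) * (∑ j,
          ∑ i, h (Z j i ω).1 (Z j i ω).2 / hj j (Z j i ω).1 (Z j i ω).2 * δ (Z j i ω)) := by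
        apply mul_nonneg (by positivity)
        apply Finset.sum_nonneg; intro j _
        apply Finset.sum_nonneg; intro i _
        exact mul_nonneg (div_nonneg (hh_nonneg _ _) (hj_pos _ _ _).le) (hδ _).1
      have t2 : 0 ≤ 2 * L * Mnaive * g / (3 * n) := by
        apply div_nonneg _ (by linarith)
        have : 0 ≤ 2 * L := by linarith
        exact mul_nonneg (mul_nonneg this hMn) hg0.le
      have t3 : 0 ≤ L * Real.sqrt (2 * W * g / n ^ 2) :=
        mul_nonneg hL (Real.sqrt_nonneg _)
      linarith
    rw [hset, measure_univ]
    exact ENNReal.ofReal_le_one.mpr (by linarith)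
  -- main case
  have hL2W : 0 < L ^ 2 * W := lt_of_le_of_ne (mul_nonneg (sq_nonneg _) hW0) (Ne.symm hLW)
  set c : ℝ := L ^ 2 * W with hc_def
  set T : ℝ := 2 * L * Mnaive * g / 3 + L * Real.sqrt (2 * W * g) with hT_def
  have hT0 : 0 ≤ T := by
    apply add_nonneg
    · apply div_nonneg _ (by norm_num)
      have : 0 ≤ 2 * L := by linarith
      exact mul_nonneg (mul_nonneg this hMn) hg0.le
    · exact mul_nonneg hL (Real.sqrt_nonneg _)
  set s : ℝ := T / c with hs_def
  have hs0 : 0 ≤ s := div_nonneg hT0 hL2W.le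
  -- the sampled variables
  set G : Fin J → X × Y → ℝ := fun j z => h z.1 z.2 / hj j z.1 z.2 * δ z with hG_def
  have hGmeas : ∀ j, Measurable (G j) := fun j => (hh_meas.div (hj_meas j)).mul hδ_meas
  set Y' : ((j : Fin J) × Fin (nvec j)) → Ω → ℝ :=
    fun p ω => G p.1 (Z p.1 p.2 ω) with hY'_def
  have hY'meas : ∀ p, Measurable (Y' p) := fun p => (hGmeas p.1).comp (hZ_meas p.1 p.2)
  have hY'indep : iIndepFun Y' μΩ :=
    hind.comp (fun p => G p.1) (fun p => hGmeas p.1)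
  have hY'bdd : ∀ p ω, Y' p ω ∈ Set.Icc 0 (L * Mnaive) := by
    intro p ω
    constructor
    · exact mul_nonneg (div_nonneg (hh_nonneg _ _) (hj_pos _ _ _).le) (hδ _).1
    · have h1 : h (Z p.1 p.2 ω).1 (Z p.1 p.2 ω).2 / hj p.1 (Z p.1 p.2 ω).1 (Z p.1 p.2 ω).2
          ≤ Mnaive := (hM p.1 _ _).trans (hMnaive p.1)
      have h2 := (hδ (Z p.1 p.2 ω)).2
      have h3 : 0 ≤ h (Z p.1 p.2 ω).1 (Z p.1 p.2 ω).2 /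
          hj p.1 (Z p.1 p.2 ω).1 (Z p.1 p.2 ω).2 :=
        div_nonneg (hh_nonneg _ _) (hj_pos _ _ _).le
      calc Y' p ω ≤ Mnaive * L := mul_le_mul h1 h2 (hδ _).1 hMn
        _ = L * Mnaive := mul_comm _ _
  -- transfer integrals through the law
  have hmap : ∀ (j : Fin J) (i : Fin (nvec j)) (F : X × Y → ℝ), Measurable F →
      ∫ ω, F (Z j i ω) ∂μΩ = ∫ z, F z * (hj j z.1 z.2 * Pd z.1) ∂(μ.prod ν) := by
    intro j i F hF
    rw [← integral_map (hZ_meas j i).aemeasurable hF.aestronglyMeasurable, hlaw j i]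
    have hwmeas : Measurable (fun z : X × Y => (hj j z.1 z.2 * Pd z.1).toNNReal) :=
      ((hj_meas j).mul (hP_meas.comp measurable_fst)).real_toNNReal
    have hdens : (fun z : X × Y => ENNReal.ofReal (hj j z.1 z.2 * Pd z.1)) =
        fun z : X × Y => ((hj j z.1 z.2 * Pd z.1).toNNReal : ℝ≥0∞) := rfl
    rw [hdens, integral_withDensity_eq_integral_smul hwmeas]
    congr 1; funext z
    rw [NNReal.smul_def, smul_eq_mul,
      Real.coe_toNNReal _ (mul_nonneg (hj_pos j z.1 z.2).le (hP_nonneg z.1))]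
    ring
  have hmean : ∀ p : ((j : Fin J) × Fin (nvec j)), ∫ ω, Y' p ω ∂μΩ = R := by
    intro p
    rw [show (fun ω => Y' p ω) = fun ω => G p.1 (Z p.1 p.2 ω) from rfl,
      hmap p.1 p.2 (G p.1) (hGmeas p.1), hR_def]
    congr 1; funext z
    have hne := (hj_pos p.1 z.1 z.2).ne'
    simp only [hG_def]; field_simp
  have hvar : ∀ p : ((j : Fin J) × Fin (nvec j)),
      ∫ ω, (Y' p ω) ^ 2 ∂μΩ ≤ L ^ 2 * d2 p.1 := by
    intro p
    rw [show (fun ω => (Y' p ω) ^ 2) = fun ω => (fun z => (G p.1 z) ^ 2) (Z p.1 p.2 ω)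
        from rfl, hmap p.1 p.2 _ ((hGmeas p.1).pow_const 2)]
    have hle : ∀ z : X × Y, (G p.1 z) ^ 2 * (hj p.1 z.1 z.2 * Pd z.1)
        ≤ L ^ 2 * ((h z.1 z.2) ^ 2 / hj p.1 z.1 z.2 * Pd z.1) := by
      intro z
      have hjp := hj_pos p.1 z.1 z.2
      have heq : (G p.1 z) ^ 2 * (hj p.1 z.1 z.2 * Pd z.1)
          = (δ z) ^ 2 * ((h z.1 z.2) ^ 2 / hj p.1 z.1 z.2 * Pd z.1) := by
        have hne := hjp.ne'
        simp only [hG_def]; field_simp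
      rw [heq]
      apply mul_le_mul_of_nonneg_right _
        (mul_nonneg (div_nonneg (sq_nonneg _) hjp.le) (hP_nonneg z.1))
      nlinarith [(hδ z).1, (hδ z).2]
    have hint1 : Integrable
        (fun z : X × Y => (G p.1 z) ^ 2 * (hj p.1 z.1 z.2 * Pd z.1)) (μ.prod ν) := by
      apply Integrable.mono' ((hd2_int p.1).const_mul (L ^ 2))
      · exact (((hGmeas p.1).pow_const 2).mul
          ((hj_meas p.1).mul (hP_meas.comp measurable_fst))).aestronglyMeasurable
      · filter_upwards with z
        rw [Real.norm_eq_abs, abs_of_nonneg]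
        · exact hle z
        · exact mul_nonneg (sq_nonneg _)
            (mul_nonneg (hj_pos p.1 z.1 z.2).le (hP_nonneg z.1))
    calc ∫ z, (G p.1 z) ^ 2 * (hj p.1 z.1 z.2 * Pd z.1) ∂(μ.prod ν)
        ≤ ∫ z, L ^ 2 * ((h z.1 z.2) ^ 2 / hj p.1 z.1 z.2 * Pd z.1) ∂(μ.prod ν) :=
          integral_mono hint1 ((hd2_int p.1).const_mul (L ^ 2)) hle
      _ = L ^ 2 * d2 p.1 := by rw [integral_const_mul]
  -- sums over the sigma type
  have hsum_m : ∑ _p : ((j : Fin J) × Fin (nvec j)), R = n * R := by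
    rw [Finset.sum_const, hn_def]
    simp [Finset.card_univ, Fintype.card_sigma, nsmul_eq_mul, Finset.sum_mul]
  have hsum_v : ∑ p : ((j : Fin J) × Fin (nvec j)), L ^ 2 * d2 p.1 = L ^ 2 * W := by
    rw [← Finset.univ_sigma_univ, Finset.sum_sigma, hWd2, Finset.mul_sum]
    apply Finset.sum_congr rfl
    intro j _
    show ∑ _s : Fin (nvec j), L ^ 2 * d2 j = L ^ 2 * ((nvec j : ℝ) * d2 j)
    rw [Finset.sum_const]
    simp only [Finset.card_univ, Fintype.card_fin, nsmul_eq_mul]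
    ring
  -- Chernoff bound
  have hbound := lower_tail_bound μΩ Y' hY'meas hY'indep (L * Mnaive) hY'bdd
    (fun _ => R) (fun p => L ^ 2 * d2 p.1) hmean hvar s T hs0
  rw [hsum_m, hsum_v] at hbound
  -- exponent estimate
  have hexp : -(s * T) + s ^ 2 * (L ^ 2 * W) / 2 ≤ -g := by
    have hTsq : 2 * c * g ≤ T ^ 2 := by
      have h1 : L * Real.sqrt (2 * W * g) ≤ T := by
        rw [hT_def]
        have : 0 ≤ 2 * L * Mnaive * g / 3 := by
          apply div_nonneg _ (by norm_num)
          exact mul_nonneg (mul_nonneg (by linarith) hMn) hg0.le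
        linarith
      have h2 : (L * Real.sqrt (2 * W * g)) ^ 2 = L ^ 2 * (2 * W * g) := by
        rw [mul_pow, Real.sq_sqrt (by positivity)]
      have h3 : (L * Real.sqrt (2 * W * g)) ^ 2 ≤ T ^ 2 := by
        apply pow_le_pow_left₀ (mul_nonneg hL (Real.sqrt_nonneg _)) h1
      rw [h2] at h3
      rw [hc_def]; nlinarith
    have heq : -(s * T) + s ^ 2 * (L ^ 2 * W) / 2 = -(T ^ 2 / (2 * c)) := by
      rw [hs_def, hc_def]
      field_simp
      ring
    rw [heq, neg_le_neg_iff]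
    rw [le_div_iff₀ (by linarith : (0:ℝ) < 2 * c)]
    nlinarith
  have hfinal : (μΩ {ω | T ≤ n * R - ∑ p : ((j : Fin J) × Fin (nvec j)), Y' p ω}).toReal
      ≤ η := by
    refine hbound.trans ?_
    calc Real.exp (-(s * T) + s ^ 2 * (L ^ 2 * W) / 2) ≤ Real.exp (-g) :=
        Real.exp_le_exp.mpr hexp
      _ = η := by
        rw [hg_def, one_div, Real.log_inv, neg_neg, Real.exp_log hη]
  set bad : Set Ω := {ω | T ≤ n * R - ∑ p : ((j : Fin J) × Fin (nvec j)), Y' p ω}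
    with hbad_def
  have hSmeas : Measurable (fun ω => ∑ p : ((j : Fin J) × Fin (nvec j)), Y' p ω) :=
    Finset.measurable_sum Finset.univ fun p _ => hY'meas p
  have hbad_meas : MeasurableSet bad :=
    measurableSet_le measurable_const (measurable_const.sub hSmeas)
  have hbad_le : μΩ bad ≤ ENNReal.ofReal η := by
    rw [← ENNReal.ofReal_toReal (measure_ne_top μΩ bad)]
    exact ENNReal.ofReal_le_ofReal hfinal
  -- event inclusion
  have hsub : badᶜ ⊆ {ω | R ≤ (1 / n) * (∑ j,
        ∑ i, h (Z j i ω).1 (Z j i ω).2 / hj j (Z j i ω).1 (Z j i ω).2 * δ (Z j i ω))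
      + 2 * L * Mnaive * g / (3 * n)
      + L * Real.sqrt (2 * W * g / n ^ 2)} := by
    intro ω hω
    simp only [hbad_def, Set.mem_compl_iff, Set.mem_setOf_eq, not_le] at hω
    simp only [Set.mem_setOf_eq]
    set Q : ℝ := ∑ j, ∑ i, h (Z j i ω).1 (Z j i ω).2 /
        hj j (Z j i ω).1 (Z j i ω).2 * δ (Z j i ω) with hQ_def
    have hQeq : ∑ p : ((j : Fin J) × Fin (nvec j)), Y' p ω = Q := by
      rw [hQ_def, ← Finset.univ_sigma_univ, Finset.sum_sigma]
    rw [hQeq] at hω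
    have hsqrt : Real.sqrt (2 * W * g / n ^ 2) = Real.sqrt (2 * W * g) / n := by
      rw [Real.sqrt_div (by positivity) (n ^ 2), Real.sqrt_sq hn'.le]
    rw [hsqrt]
    have expand : ((1 / n) * Q + 2 * L * Mnaive * g / (3 * n)
        + L * (Real.sqrt (2 * W * g) / n)) * n = Q + T := by
      rw [hT_def]; field_simp; ring
    have key : R * n < ((1 / n) * Q + 2 * L * Mnaive * g / (3 * n)
        + L * (Real.sqrt (2 * W * g) / n)) * n := by
      rw [expand]; linarith
    exact le_of_lt ((mul_lt_mul_iff_left₀ hn').mp key)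
  calc ENNReal.ofReal (1 - η) = 1 - ENNReal.ofReal η := by
        rw [ENNReal.ofReal_sub _ hη.le, ENNReal.ofReal_one]
    _ ≤ 1 - μΩ bad := tsub_le_tsub_left hbad_le 1
    _ = μΩ badᶜ := (prob_compl_eq_one_sub hbad_meas).symm
    _ ≤ _ := measure_mono hsub
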